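/- Let f be the ECA of Wolfram rule 60, f(a,b,c) = a XOR b. If n + 1 is a power of 2, then for every assignment x of Boolean states to positions -n,…,n, f^n(x) equals the XOR of the n+1 cells x(-n), x(-n+1), …, x(0); that is, f^n computes the parity of the first n+1 cells. -/

import Mathlib

/-- The `n`-th iterate of a one-dimensional CA local rule `f`, applied to an
assignment `x` of states to integer positions. It only depends on positions `-n,…,n`:
`caIter f 1 x = f (x (-1)) (x 0) (x 1)` and
`caIter f (n+1) x = f (caIter f n (x shifted left)) (caIter f n x) (caIter f n (x shifted right))`. -/
def caIter {Q : Type*} (f : Q → Q → Q → Q) : ℕ → (ℤ → Q) → Q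
  | 0, x => x 0
  | n + 1, x =>
      f (caIter f n fun i => x (i - 1)) (caIter f n x) (caIter f n fun i => x (i + 1))

/-- The assignment of states to integer positions determined by left cells `u`
(`u i` at position `-(i+1)`), center `c` (position `0`) and right cells `v`
(`v i` at position `i+1`); positions outside `-n,…,n` (irrelevant for `caIter f n`)
are padded with `c`. -/
def caEmbed {Q : Type*} (n : ℕ) (u : Fin n → Q) (c : Q) (v : Fin n → Q) : ℤ → Q :=
  fun i =>
    if h : 1 ≤ i ∧ i ≤ (n : ℤ) then v ⟨(i - 1).toNat, by omega⟩
    else if h' : 1 ≤ -i ∧ -i ≤ (n : ℤ) then u ⟨(-i - 1).toNat, by omega⟩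
    else c

/-- `f^n(u, c, v)`. -/
def caApply {Q : Type*} (f : Q → Q → Q → Q) (n : ℕ) (u : Fin n → Q) (c : Q)
    (v : Fin n → Q) : Q :=
  caIter f n (caEmbed n u c v)

/-- Number of distinct rows of the matrix `M_c^n`. -/
noncomputable def caRows {Q : Type*} (f : Q → Q → Q → Q) (n : ℕ) (c : Q) : ℕ :=
  Set.ncard {g : (Fin n → Q) → Q | ∃ u : Fin n → Q, g = fun v => caApply f n u c v}

/-- Number of distinct columns of the matrix `M_c^n`. -/
noncomputable def caCols {Q : Type*} (f : Q → Q → Q → Q) (n : ℕ) (c : Q) : ℕ :=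
  Set.ncard {g : (Fin n → Q) → Q | ∃ v : Fin n → Q, g = fun u => caApply f n u c v}

/-- `d_n(f)` for an ECA `f`. -/
noncomputable def dnECA (f : Bool → Bool → Bool → Bool) (n : ℕ) : ℕ :=
  max (max (caRows f n false) (caCols f n false)) (max (caRows f n true) (caCols f n true))

section

open Finset

theorem choose_odd_of_pow (m k n : ℕ) (h : n + 1 = 2 ^ m) (hk : k ≤ n) : Odd (n.choose k) := by
  have hp : Fact (Nat.Prime 2) := ⟨Nat.prime_two⟩
  have h1 : n < 2 ^ m := by omega
  have h2 : k < 2 ^ m := by omega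
  have hmod := Choose.choose_modEq_prod_range_choose_nat (p := 2) (a := m) h1 h2
  have hd : ∀ i ∈ range m, (n / 2 ^ i % 2).choose (k / 2 ^ i % 2) = 1 := by
    intro i hi
    rw [mem_range] at hi
    have hle : 2 ^ i * 2 ^ (m - i) = 2 ^ m := by rw [← pow_add]; congr 1; omega
    have h2i : 1 ≤ 2 ^ i := Nat.one_le_two_pow
    have h2mi : 2 ≤ 2 ^ (m - i) := by
      calc 2 = 2 ^ 1 := rfl
      _ ≤ 2 ^ (m - i) := Nat.pow_le_pow_right (by norm_num) (by omega)
    have hn : n = 2 ^ i * (2 ^ (m - i) - 1) + (2 ^ i - 1) := by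
      have h3 : 2 ^ i * (2 ^ (m - i) - 1) = 2 ^ m - 2 ^ i := by
        rw [Nat.mul_sub, mul_one, hle]
      have h5 : 2 ^ i ≤ 2 ^ m := Nat.pow_le_pow_right (by norm_num) (by omega)
      omega
    have hdiv : n / 2 ^ i = 2 ^ (m - i) - 1 := by
      rw [hn, Nat.mul_add_div (by omega), Nat.div_eq_of_lt (by omega)]; omega
    have hmod1 : n / 2 ^ i % 2 = 1 := by
      rw [hdiv]
      obtain ⟨t, ht⟩ : 2 ∣ 2 ^ (m - i) := dvd_pow_self 2 (by omega)
      omega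
    rw [hmod1]
    have hb : k / 2 ^ i % 2 < 2 := Nat.mod_lt _ (by norm_num)
    interval_cases hkk : (k / 2 ^ i % 2) <;> simp
  rw [Finset.prod_congr rfl hd, Finset.prod_const_one] at hmod
  rw [Nat.odd_iff]
  unfold Nat.ModEq at hmod
  omega

theorem pascal_sum {R : Type*} [CommRing R] (n : ℕ) (w : ℕ → R) :
    ∑ i ∈ range (n + 2), (Nat.choose (n + 1) i : R) * w i
      = ∑ i ∈ range (n + 1), (Nat.choose n i : R) * w (i + 1)
        + ∑ i ∈ range (n + 1), (Nat.choose n i : R) * w i := by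
  rw [Finset.sum_range_succ' _ (n + 1)]
  simp only [Nat.choose_succ_succ, Nat.cast_add, add_mul]
  rw [Finset.sum_add_distrib]
  have h1 : ∑ i ∈ range (n + 1), (Nat.choose n (i + 1) : R) * w (i + 1)
      + (Nat.choose n 0 : R) * w 0 = ∑ i ∈ range (n + 1), (Nat.choose n i : R) * w i := by
    rw [← Finset.sum_range_succ' (fun i => (Nat.choose n i : R) * w i) (n + 1),
      Finset.sum_range_succ]
    simp
  rw [Nat.choose_zero_right] at *
  linear_combination h1

theorem rule60_sum (f : Bool → Bool → Bool → Bool)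
    (hf : ∀ a b c : Bool, f a b c = xor a b) :
    ∀ (n : ℕ) (x : ℤ → Bool),
      (if caIter f n x then (1 : ZMod 2) else 0) =
        ∑ i ∈ Finset.range (n + 1),
          (n.choose i : ZMod 2) * (if x (-(i : ℤ)) then 1 else 0) := by
  intro n
  induction n with
  | zero => intro x; simp [caIter]; split_ifs <;> simp_all
  | succ n ih =>
    intro x
    have hstep : caIter f (n + 1) x
        = f (caIter f n fun i => x (i - 1)) (caIter f n x) (caIter f n fun i => x (i + 1)) := rfl
    have key : ∀ a b : Bool, (if xor a b then (1 : ZMod 2) else 0)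
        = (if a then 1 else 0) + (if b then 1 else 0) := by decide
    rw [hstep, hf, key, ih, ih]
    rw [pascal_sum n (fun i => if x (-(i : ℤ)) then (1 : ZMod 2) else 0)]
    congr 1
    apply Finset.sum_congr rfl
    intro i _
    congr 2
    push_cast
    ring

end
/-- For rule 60, `f(a,b,c) = a ⊕ b`, if `n + 1` is a power of 2 then `f^n(x)` is the XOR
(parity of the number of `true`s) of the `n+1` cells `x(-n), x(-n+1), …, x(0)`. -/
theorem rule60_parity (f : Bool → Bool → Bool → Bool)
    (hf : ∀ a b c : Bool, f a b c = xor a b)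
    (n : ℕ) (hn : 1 ≤ n) (hpow : ∃ m : ℕ, n + 1 = 2 ^ m) :
    ∀ x : ℤ → Bool,
      caIter f n x =
        decide (Odd (((Finset.range (n + 1)).filter
          (fun i : ℕ => x (-(n : ℤ) + (i : ℤ)) = true)).card)) := by
  obtain ⟨m, hm⟩ := hpow
  intro x
  have h1 := rule60_sum f hf n x
  have hch : ∀ i ∈ Finset.range (n + 1),
      (n.choose i : ZMod 2) * (if x (-(i : ℤ)) then 1 else 0)
        = (if x (-(i : ℤ)) then (1 : ZMod 2) else 0) := by
    intro i hi
    rw [Finset.mem_range] at hi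
    have hodd := choose_odd_of_pow m i n hm (by omega)
    rw [Nat.odd_iff] at hodd
    have hone : ((n.choose i : ℕ) : ZMod 2) = 1 := by
      rw [← ZMod.natCast_mod, hodd]; norm_num
    rw [hone, one_mul]
  rw [Finset.sum_congr rfl hch] at h1
  have h2 := Finset.sum_range_reflect
    (fun i => if x (-(i : ℤ)) then (1 : ZMod 2) else 0) (n + 1)
  rw [← h2] at h1
  have h3 : ∀ j ∈ Finset.range (n + 1),
      (if x (-((n + 1 - 1 - j : ℕ) : ℤ)) then (1 : ZMod 2) else 0)
        = (if x (-(n : ℤ) + (j : ℤ)) then (1 : ZMod 2) else 0) := by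
    intro j hj
    rw [Finset.mem_range] at hj
    have he : (-((n + 1 - 1 - j : ℕ) : ℤ)) = -(n : ℤ) + (j : ℤ) := by
      have h4 : ((n + 1 - 1 - j : ℕ) : ℤ) = (n : ℤ) - j := by
        omega
      rw [h4]; ring
    rw [he]
  rw [Finset.sum_congr rfl h3, Finset.sum_boole] at h1
  set c := ((Finset.range (n + 1)).filter
      (fun i : ℕ => x (-(n : ℤ) + (i : ℤ)) = true)).card with hc
  rcases Nat.even_or_odd c with he | ho
  · have h0 : ((c : ℕ) : ZMod 2) = 0 := by
      rw [← ZMod.natCast_mod, Nat.even_iff.mp he]; norm_num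
    rw [h0] at h1
    have hfalse : caIter f n x = false := by
      cases h : caIter f n x
      · rfl
      · rw [h, if_pos rfl] at h1; exact absurd h1 one_ne_zero
    simp [hfalse, Nat.not_odd_iff_even.mpr he]
  · have h0 : ((c : ℕ) : ZMod 2) = 1 := by
      rw [← ZMod.natCast_mod, Nat.odd_iff.mp ho]; norm_num
    rw [h0] at h1
    have htrue : caIter f n x = true := by
      cases h : caIter f n x
      · rw [h, if_neg (by simp)] at h1; exact absurd h1.symm one_ne_zero
      · rfl
    simp [htrue, ho]
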